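/- For 0 < ξ < λ₀ real, the Cauchy principal value P.V. ∫_0^{λ₀} √(λ₀-λ)/(ξ-λ) dλ equals 2√λ₀ - 2√(λ₀-ξ)·log(√(λ₀-ξ)+√λ₀) + √(λ₀-ξ)·log ξ. -/

import Mathlib

open Real MeasureTheory Filter Set

/-- An antiderivative of `√(lam0-lam)/(ξ-lam)` away from `lam = ξ`. -/
noncomputable def Fpv (lam0 ξ lam : ℝ) : ℝ :=
  -2 * Real.sqrt (lam0 - lam)
  - Real.sqrt (lam0 - ξ) * Real.log (Real.sqrt (lam0 - lam) - Real.sqrt (lam0 - ξ))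
  + Real.sqrt (lam0 - ξ) * Real.log (Real.sqrt (lam0 - lam) + Real.sqrt (lam0 - ξ))

lemma pv_sqrt_ne (lam0 ξ x : ℝ) (h1 : ξ < lam0) (hx : x ≠ ξ) :
    Real.sqrt (lam0 - x) ≠ Real.sqrt (lam0 - ξ) := by
  have ha0 : 0 < Real.sqrt (lam0 - ξ) := Real.sqrt_pos.mpr (by linarith)
  rcases le_or_gt lam0 x with h | h
  · have : Real.sqrt (lam0 - x) = 0 := Real.sqrt_eq_zero'.mpr (by linarith)
    rw [this]; exact (ne_of_lt ha0)
  · intro hcon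
    have := (Real.sqrt_inj (by linarith) (by linarith)).mp hcon
    exact hx (by linarith)

lemma Fpv_continuousAt (lam0 ξ x : ℝ) (h1 : ξ < lam0) (hx : x ≠ ξ) :
    ContinuousAt (Fpv lam0 ξ) x := by
  have ha0 : 0 < Real.sqrt (lam0 - ξ) := Real.sqrt_pos.mpr (by linarith)
  have hu : ContinuousAt (fun lam => Real.sqrt (lam0 - lam)) x :=
    (Real.continuous_sqrt.comp (continuous_const.sub continuous_id)).continuousAt
  have h2 : ContinuousAt (fun lam => Real.log (Real.sqrt (lam0 - lam) - Real.sqrt (lam0 - ξ))) x :=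
    (hu.sub continuousAt_const).log (sub_ne_zero.mpr (pv_sqrt_ne lam0 ξ x h1 hx))
  have h3 : ContinuousAt (fun lam => Real.log (Real.sqrt (lam0 - lam) + Real.sqrt (lam0 - ξ))) x :=
    (hu.add continuousAt_const).log (add_pos_of_nonneg_of_pos (Real.sqrt_nonneg _) ha0).ne'
  exact ((continuousAt_const.mul hu).sub (continuousAt_const.mul h2)).add
    (continuousAt_const.mul h3)

lemma Fpv_hasDerivAt (lam0 ξ x : ℝ) (h1 : ξ < lam0) (hx1 : x < lam0) (hx2 : x ≠ ξ) :
    HasDerivAt (Fpv lam0 ξ) (Real.sqrt (lam0 - x) / (ξ - x)) x := by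
  have hlx : 0 < lam0 - x := by linarith
  set a := Real.sqrt (lam0 - ξ) with ha
  set u := Real.sqrt (lam0 - x) with hud
  have ha0 : 0 < a := Real.sqrt_pos.mpr (by linarith)
  have hu0 : 0 < u := Real.sqrt_pos.mpr hlx
  have hune : u ≠ a := pv_sqrt_ne lam0 ξ x h1 hx2
  have hu2 : u ^ 2 = lam0 - x := Real.sq_sqrt hlx.le
  have ha2 : a ^ 2 = lam0 - ξ := Real.sq_sqrt (by linarith)
  have hU : HasDerivAt (fun lam => Real.sqrt (lam0 - lam)) (-(1 / (2 * u))) x := by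
    have hsub : HasDerivAt (fun lam : ℝ => lam0 - lam) (-1) x := by
      simpa using (hasDerivAt_id x).const_sub lam0
    have := (Real.hasDerivAt_sqrt (ne_of_gt hlx)).comp x hsub
    exact this.congr_deriv (by rw [← hud]; ring)
  have hL1 : HasDerivAt (fun lam => Real.log (Real.sqrt (lam0 - lam) - a))
      (-(1 / (2 * u)) / (u - a)) x := by
    have := (Real.hasDerivAt_log (sub_ne_zero.mpr hune)).comp x (hU.sub_const a)
    exact this.congr_deriv (by ring)
  have hL2 : HasDerivAt (fun lam => Real.log (Real.sqrt (lam0 - lam) + a))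
      (-(1 / (2 * u)) / (u + a)) x := by
    have := (Real.hasDerivAt_log (by positivity : u + a ≠ 0)).comp x (hU.add_const a)
    exact this.congr_deriv (by ring)
  have hall : HasDerivAt (Fpv lam0 ξ)
      ((-2) * (-(1 / (2 * u))) - a * (-(1 / (2 * u)) / (u - a))
        + a * (-(1 / (2 * u)) / (u + a))) x :=
    ((hU.const_mul (-2)).sub (hL1.const_mul a)).add (hL2.const_mul a)
  convert hall using 1
  have hxi : ξ - x = (u - a) * (u + a) := by linear_combination ha2 - hu2
  rw [hxi]
  have h1' : u - a ≠ 0 := sub_ne_zero.mpr hune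
  have h2' : u + a ≠ 0 := by positivity
  field_simp
  linarith [hu2, ha2]

lemma pv_ftc (lam0 ξ b c : ℝ) (h1 : ξ < lam0) (hbc : b ≤ c) (hc : c ≤ lam0)
    (hne : ∀ x ∈ Set.Icc b c, x ≠ ξ) :
    ∫ lam in Set.Ioo b c, Real.sqrt (lam0 - lam) / (ξ - lam)
      = Fpv lam0 ξ c - Fpv lam0 ξ b := by
  rw [← MeasureTheory.integral_Ioc_eq_integral_Ioo,
    ← intervalIntegral.integral_of_le hbc]
  apply intervalIntegral.integral_eq_sub_of_hasDerivAt_of_le hbc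
  · exact fun x hx => (Fpv_continuousAt lam0 ξ x h1 (hne x hx)).continuousWithinAt
  · intro x hx
    exact Fpv_hasDerivAt lam0 ξ x h1 (lt_of_lt_of_le hx.2 hc)
      (hne x ⟨hx.1.le, hx.2.le⟩)
  · apply ContinuousOn.intervalIntegrable
    rw [Set.uIcc_of_le hbc]
    apply ContinuousOn.div
    · exact (Real.continuous_sqrt.comp (continuous_const.sub continuous_id)).continuousOn
    · exact (continuous_const.sub continuous_id).continuousOn
    · exact fun x hx => sub_ne_zero.mpr (Ne.symm (hne x hx))

theorem pv_integral_sqrt (lam0 ξ : ℝ) (h0 : 0 < ξ) (h1 : ξ < lam0) :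
    Filter.Tendsto
      (fun ε : ℝ =>
        (∫ lam in Set.Ioo 0 (ξ - ε), Real.sqrt (lam0 - lam) / (ξ - lam)) +
        ∫ lam in Set.Ioo (ξ + ε) lam0, Real.sqrt (lam0 - lam) / (ξ - lam))
      (nhdsWithin 0 (Set.Ioi 0))
      (nhds (2 * Real.sqrt lam0
        - 2 * Real.sqrt (lam0 - ξ) * Real.log (Real.sqrt (lam0 - ξ) + Real.sqrt lam0)
        + Real.sqrt (lam0 - ξ) * Real.log ξ)) := by
  set a := Real.sqrt (lam0 - ξ) with ha
  set s := Real.sqrt lam0 with hs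
  have hξl : (0:ℝ) < lam0 - ξ := by linarith
  have ha0 : 0 < a := Real.sqrt_pos.mpr hξl
  have hs0 : 0 < s := Real.sqrt_pos.mpr (by linarith)
  have ha2 : a ^ 2 = lam0 - ξ := Real.sq_sqrt hξl.le
  have hs2 : s ^ 2 = lam0 := Real.sq_sqrt (by linarith)
  have has : a < s := Real.sqrt_lt_sqrt hξl.le (by linarith)
  set G : ℝ → ℝ := fun ε =>
    -2 * Real.sqrt (lam0 - ξ + ε) + 2 * Real.sqrt (lam0 - ξ - ε)
    + 2 * a * Real.log (Real.sqrt (lam0 - ξ + ε) + a)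
    - 2 * a * Real.log (Real.sqrt (lam0 - ξ - ε) + a)
    + 2 * s + a * Real.log ξ - 2 * a * Real.log (a + s) with hG
  have hGcont : ContinuousAt G 0 := by
    have c1 : ContinuousAt (fun ε : ℝ => Real.sqrt (lam0 - ξ + ε)) 0 :=
      (Real.continuous_sqrt.comp (continuous_const.add continuous_id)).continuousAt
    have c2 : ContinuousAt (fun ε : ℝ => Real.sqrt (lam0 - ξ - ε)) 0 :=
      (Real.continuous_sqrt.comp (continuous_const.sub continuous_id)).continuousAt
    have c3 : ContinuousAt (fun ε : ℝ => Real.log (Real.sqrt (lam0 - ξ + ε) + a)) 0 :=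
      (c1.add continuousAt_const).log (add_pos_of_nonneg_of_pos (Real.sqrt_nonneg _) ha0).ne'
    have c4 : ContinuousAt (fun ε : ℝ => Real.log (Real.sqrt (lam0 - ξ - ε) + a)) 0 :=
      (c2.add continuousAt_const).log ?_
    · exact ((((((continuousAt_const.mul c1).add (continuousAt_const.mul c2)).add
        (continuousAt_const.mul c3)).sub (continuousAt_const.mul c4)).add
        continuousAt_const).add continuousAt_const).sub continuousAt_const
    · exact (add_pos_of_nonneg_of_pos (Real.sqrt_nonneg _) ha0).ne'
  have hG0 : G 0 = 2 * s - 2 * a * Real.log (a + s) + a * Real.log ξ := by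
    simp only [hG, add_zero, sub_zero, ← ha]
    ring
  have hGt : Filter.Tendsto G (nhdsWithin 0 (Set.Ioi 0))
      (nhds (2 * s - 2 * a * Real.log (a + s) + a * Real.log ξ)) := by
    rw [← hG0]
    exact hGcont.tendsto.mono_left nhdsWithin_le_nhds
  apply Filter.Tendsto.congr' _ hGt
  filter_upwards [Ioo_mem_nhdsGT_of_mem
    (⟨le_refl (0:ℝ), lt_min h0 hξl⟩ : (0:ℝ) ∈ Set.Ico 0 (min ξ (lam0 - ξ)))] with ε hε
  obtain ⟨hε0, hεδ⟩ := hε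
  have hεξ : ε < ξ := lt_of_lt_of_le hεδ (min_le_left _ _)
  have hεl : ε < lam0 - ξ := lt_of_lt_of_le hεδ (min_le_right _ _)
  -- FTC on each piece
  have hI1 : ∫ lam in Set.Ioo 0 (ξ - ε), Real.sqrt (lam0 - lam) / (ξ - lam)
      = Fpv lam0 ξ (ξ - ε) - Fpv lam0 ξ 0 :=
    pv_ftc lam0 ξ 0 (ξ - ε) h1 (by linarith) (by linarith)
      (fun x hx => by rcases hx with ⟨_, hx2⟩; intro h; rw [h] at hx2; linarith)
  have hI2 : ∫ lam in Set.Ioo (ξ + ε) lam0, Real.sqrt (lam0 - lam) / (ξ - lam)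
      = Fpv lam0 ξ lam0 - Fpv lam0 ξ (ξ + ε) :=
    pv_ftc lam0 ξ (ξ + ε) lam0 h1 (by linarith) le_rfl
      (fun x hx => by rcases hx with ⟨hx1, _⟩; intro h; rw [h] at hx1; linarith)
  rw [hI1, hI2]
  -- now pure algebra
  set p := Real.sqrt (lam0 - ξ + ε) with hp
  set m := Real.sqrt (lam0 - ξ - ε) with hm
  have hp0 : 0 < p := Real.sqrt_pos.mpr (by linarith)
  have hm0 : 0 < m := Real.sqrt_pos.mpr (by linarith)
  have hp2 : p ^ 2 = lam0 - ξ + ε := Real.sq_sqrt (by linarith)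
  have hm2 : m ^ 2 = lam0 - ξ - ε := Real.sq_sqrt (by linarith)
  have hap : a < p := Real.sqrt_lt_sqrt hξl.le (by linarith)
  have hma : m < a := Real.sqrt_lt_sqrt (by linarith) (by linarith)
  -- log identities
  have hlp : Real.log (p - a) = Real.log ε - Real.log (p + a) := by
    have hprod : (p - a) * (p + a) = ε := by linear_combination hp2 - ha2
    have := Real.log_mul ((sub_pos.mpr hap).ne') (by positivity : p + a ≠ 0)
    rw [hprod] at this
    linarith [this]
  have hlm : Real.log (m - a) = Real.log ε - Real.log (m + a) := by
    have h1' : Real.log (m - a) = Real.log (a - m) := by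
      rw [show m - a = -(a - m) by ring, Real.log_neg_eq_log]
    have hprod : (a - m) * (a + m) = ε := by linear_combination ha2 - hm2
    have := Real.log_mul ((sub_pos.mpr hma).ne') (by positivity : a + m ≠ 0)
    rw [hprod] at this
    rw [h1', show m + a = a + m by ring]
    linarith [this]
  have hls : Real.log (s - a) = Real.log ξ - Real.log (a + s) := by
    have hprod : (s - a) * (a + s) = ξ := by linear_combination hs2 - ha2
    have := Real.log_mul ((sub_pos.mpr has).ne') (by positivity : a + s ≠ 0)
    rw [hprod] at this
    linarith [this]
  have hF0 : Fpv lam0 ξ lam0 = 0 := by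
    simp only [Fpv, sub_self, Real.sqrt_zero, zero_sub, zero_add, ← ha,
      Real.log_neg_eq_log]
    ring
  have hFa : Fpv lam0 ξ (ξ - ε) = -2 * p - a * Real.log (p - a) + a * Real.log (p + a) := by
    simp only [Fpv, show lam0 - (ξ - ε) = lam0 - ξ + ε by ring, ← ha, ← hp]
  have hFb : Fpv lam0 ξ (ξ + ε) = -2 * m - a * Real.log (m - a) + a * Real.log (m + a) := by
    simp only [Fpv, show lam0 - (ξ + ε) = lam0 - ξ - ε by ring, ← ha, ← hm]
  have hFz : Fpv lam0 ξ 0 = -2 * s - a * Real.log (s - a) + a * Real.log (s + a) := by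
    simp only [Fpv, sub_zero, ← ha, ← hs]
  rw [hF0, hFa, hFb, hFz]
  simp only [hG]
  rw [← hp, ← hm]
  rw [show s + a = a + s by ring]
  linear_combination a * hlp - a * hlm - a * hls
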